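/- arXiv:1305.5565 — 2 statements merged into one kernel-verified Lean document; each statement's English description precedes it below -/
import Mathlib

section
/- Fix an integer r ≥ 2. For every ε > 0 there exists δ > 0 such that the following holds. Let ν be a weighted hypergraph on nonempty finite sets V₀, …, V_r with ‖ν‖_∞ ≥ 1, and suppose ‖ν_e − 1‖_{U^e} ≤ δ·‖ν‖_∞^{−(r−1)} for every e ∈ H. Define ν'_{e₀} : V_{e₀} → ℝ_{≥0} by ν'_{e₀}(x_{e₀}) = 𝔼[ ∏_{e∈H∖{e₀}} ν_e(x_e) | x₀ ∈ V₀ ]. Then 𝔼[ (ν'_{e₀}(x_{e₀}) − 1)² | x_{e₀} ∈ V_{e₀} ] ≤ ε. -/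
open Finset
open scoped BigOperators

/-- Given `x₀, x₁ ∈ ∏ i, V i` and `ω : ι → Bool`, the mixed point `x^(ω)` whose `i`-th
coordinate is that of `x^(ωᵢ)` (with `false ↦ x₀`, `true ↦ x₁`). -/
def mixPoint {ι : Type} {V : ι → Type} (ω : ι → Bool) (x₀ x₁ : ∀ i, V i) : ∀ i, V i :=
  fun i => if ω i then x₁ i else x₀ i

/-- The Gowers box norm `‖g‖_{U^e}` of a function `g : ∏ i, V i → ℝ`. -/
noncomputable def boxNorm {ι : Type} [Fintype ι] [DecidableEq ι] {V : ι → Type}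
    [∀ i, Fintype (V i)] (g : (∀ i, V i) → ℝ) : ℝ :=
  (𝔼 x₀ : ∀ i, V i, 𝔼 x₁ : ∀ i, V i, ∏ ω : ι → Bool, g (mixPoint ω x₀ x₁)) ^
    ((1 : ℝ) / 2 ^ Fintype.card ι)

/-- `V_{e_j}`, the product of the `V i` over the edge `e_j = J ∖ {j}`. -/
abbrev EdgeSpace {r : ℕ} (V : Fin (r + 1) → Type) (j : Fin (r + 1)) : Type :=
  ∀ i : {i : Fin (r + 1) // i ≠ j}, V i

/-- `‖ν‖_∞`, the maximum value taken by any of the weights `ν_e`, `e ∈ H`,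
of a weighted hypergraph `ν` (where `ν j` is the weight on the edge `e_j`). -/
noncomputable def hypSup {r : ℕ} (V : Fin (r + 1) → Type) [∀ i, Fintype (V i)]
    (ν : ∀ j : Fin (r + 1), EdgeSpace V j → ℝ) : ℝ :=
  ⨆ j, ⨆ x : EdgeSpace V j, ν j x

/-- The point of `V_{e_j}` with `0`-coordinate `x₀` and remaining coordinates given by
`y ∈ V_{e₀}` (for `j ≠ 0`; the coordinate `0` belongs to `e_j`). -/
def glue {r : ℕ} {V : Fin (r + 1) → Type} (j : Fin (r + 1)) (x₀ : V 0)
    (y : EdgeSpace V 0) : EdgeSpace V j :=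
  fun i => if h : (i : Fin (r + 1)) = 0 then cast (congrArg V h).symm x₀ else y ⟨i, h⟩

set_option linter.unusedSectionVars false
set_option maxHeartbeats 1000000

namespace BoxProof

variable {ι : Type} [Fintype ι] [DecidableEq ι] {V : ι → Type}
  [∀ i, Fintype (V i)] [∀ i, Nonempty (V i)]

noncomputable def SE (F : (ι → Bool) → (∀ i, V i) → ℝ) : ℝ :=
  𝔼 p : (∀ i, V i) × (∀ i, V i), ∏ ω : ι → Bool, F ω (mixPoint ω p.1 p.2)

def extBit (d : ι) (b : Bool) (σ : {i : ι // i ≠ d} → Bool) : ι → Bool :=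
  fun i => if h : i = d then b else σ ⟨i, h⟩

@[simp] lemma extBit_self (d : ι) (b : Bool) (σ : {i : ι // i ≠ d} → Bool) :
    extBit d b σ d = b := dif_pos rfl

lemma extBit_ne (d : ι) (b : Bool) (σ : {i : ι // i ≠ d} → Bool) {i : ι} (h : i ≠ d) :
    extBit d b σ i = σ ⟨i, h⟩ := dif_neg h

def asm (d : ι) (a : V d) (z : ∀ i : {i : ι // i ≠ d}, V i) : ∀ i, V i :=
  (Equiv.piSplitAt d V).symm (a, z)

def res (d : ι) (x : ∀ i, V i) : ∀ i : {i : ι // i ≠ d}, V i := fun i => x i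

@[simp] lemma asm_self (d : ι) (a : V d) (z : ∀ i : {i : ι // i ≠ d}, V i) :
    asm d a z d = a := by
  simp [asm, Equiv.piSplitAt_symm_apply]

lemma asm_ne (d : ι) (a : V d) (z : ∀ i : {i : ι // i ≠ d}, V i) {i : ι} (h : i ≠ d) :
    asm d a z i = z ⟨i, h⟩ := by
  simp [asm, Equiv.piSplitAt_symm_apply, h]

lemma asm_res (d : ι) (x : ∀ i, V i) : asm d (x d) (res d x) = x := by
  have : (Equiv.piSplitAt d V) x = (x d, res d x) := rfl
  rw [asm, ← this, Equiv.symm_apply_apply]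

lemma res_asm (d : ι) (a : V d) (z : ∀ i : {i : ι // i ≠ d}, V i) :
    res d (asm d a z) = z := by
  funext i
  exact asm_ne d a z i.2

/-- restriction of a pattern -/
def restr (d : ι) (ω : ι → Bool) : {i : ι // i ≠ d} → Bool := fun i => ω i

lemma restr_extBit (d : ι) (b : Bool) (σ : {i : ι // i ≠ d} → Bool) :
    restr d (extBit d b σ) = σ := by
  funext i
  exact extBit_ne d b σ i.2

lemma mix_asm (d : ι) (ω : ι → Bool) (a₀ a₁ : V d)
    (z₀ z₁ : ∀ i : {i : ι // i ≠ d}, V i) :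
    mixPoint ω (asm d a₀ z₀) (asm d a₁ z₁)
      = asm d (if ω d then a₁ else a₀) (mixPoint (restr d ω) z₀ z₁) := by
  funext i
  by_cases h : i = d
  · subst h
    by_cases hb : ω i <;> simp [mixPoint, hb]
  · by_cases hb : ω i <;>
      simp [mixPoint, hb, asm_ne _ _ _ h, restr]

lemma prod_split_bit (d : ι) (H : (ι → Bool) → ℝ) :
    ∏ ω : ι → Bool, H ω
      = (∏ σ : {i : ι // i ≠ d} → Bool, H (extBit d false σ))
        * ∏ σ : {i : ι // i ≠ d} → Bool, H (extBit d true σ) := by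
  have hbij : Function.Bijective (fun q : Bool × ({i : ι // i ≠ d} → Bool) => extBit d q.1 q.2) := by
    constructor
    · rintro ⟨b₁, σ₁⟩ ⟨b₂, σ₂⟩ h
      have hb : b₁ = b₂ := by
        have := congrFun h d; simpa using this
      have hσ : σ₁ = σ₂ := by
        funext i
        have := congrFun h i.1
        simp only at this
        rwa [extBit_ne d b₁ σ₁ i.2, extBit_ne d b₂ σ₂ i.2] at this
      simp [hb, hσ]
    · intro ω
      refine ⟨(ω d, restr d ω), ?_⟩
      funext i
      show extBit d (ω d) (restr d ω) i = ω i
      by_cases h : i = d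
      · subst h; simp
      · rw [extBit_ne d _ _ h]; rfl
  rw [← Fintype.prod_bijective _ hbij (fun q => H (extBit d q.1 q.2)) H (fun q => rfl)]
  rw [Fintype.prod_prod_type]
  rw [Fintype.prod_bool]
  ring

noncomputable def phi (d : ι) (b : Bool) (F : (ι → Bool) → (∀ i, V i) → ℝ)
    (z : (∀ i : {i : ι // i ≠ d}, V i) × (∀ i : {i : ι // i ≠ d}, V i)) : ℝ :=
  𝔼 a : V d, ∏ σ : {i : ι // i ≠ d} → Bool,
    F (extBit d b σ) (asm d a (mixPoint σ z.1 z.2))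

def masterEquiv (d : ι) :
    (((∀ i : {i : ι // i ≠ d}, V i) × (∀ i : {i : ι // i ≠ d}, V i)) × (V d × V d))
      ≃ ((∀ i, V i) × (∀ i, V i)) where
  toFun q := (asm d q.2.1 q.1.1, asm d q.2.2 q.1.2)
  invFun p := ((res d p.1, res d p.2), (p.1 d, p.2 d))
  left_inv := by
    rintro ⟨⟨z₀, z₁⟩, ⟨a₀, a₁⟩⟩
    show ((res d (asm d a₀ z₀), res d (asm d a₁ z₁)), (asm d a₀ z₀ d, asm d a₁ z₁ d)) = _
    simp [res_asm]
  right_inv := by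
    rintro ⟨x, y⟩
    show (asm d (x d) (res d x), asm d (y d) (res d y)) = (x, y)
    rw [asm_res, asm_res]

lemma SE_core (d : ι) (F : (ι → Bool) → (∀ i, V i) → ℝ) :
    SE F = 𝔼 z : (∀ i : {i : ι // i ≠ d}, V i) × (∀ i : {i : ι // i ≠ d}, V i),
      phi d false F z * phi d true F z := by
  have hEq := Finset.expect_equiv (e := masterEquiv (V := V) d) (s := univ) (t := univ)
    (f := fun q => ∏ ω : ι → Bool,
      F ω (mixPoint ω ((masterEquiv (V := V) d) q).1 ((masterEquiv (V := V) d) q).2))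
    (g := fun p => ∏ ω : ι → Bool, F ω (mixPoint ω p.1 p.2))
    (fun q => by simp) (fun q _ => rfl)
  rw [SE, ← hEq]
  rw [← Finset.univ_product_univ, Finset.expect_product]
  refine Finset.expect_congr rfl (fun z _ => ?_)
  have hpt : ∀ (aa : V d × V d) (ω : ι → Bool),
      mixPoint ω (masterEquiv (V := V) d (z, aa)).1 (masterEquiv (V := V) d (z, aa)).2
        = asm d (if ω d then aa.2 else aa.1) (mixPoint (restr d ω) z.1 z.2) := by
    intro aa ω
    exact mix_asm d ω aa.1 aa.2 z.1 z.2
  calc 𝔼 aa : V d × V d, ∏ ω : ι → Bool,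
        F ω (mixPoint ω (masterEquiv (V := V) d (z, aa)).1 (masterEquiv (V := V) d (z, aa)).2)
      = 𝔼 aa : V d × V d,
        ((∏ σ : {i : ι // i ≠ d} → Bool, F (extBit d false σ) (asm d aa.1 (mixPoint σ z.1 z.2)))
          * ∏ σ : {i : ι // i ≠ d} → Bool, F (extBit d true σ) (asm d aa.2 (mixPoint σ z.1 z.2))) := by
        refine Finset.expect_congr rfl (fun aa _ => ?_)
        rw [prod_split_bit d]
        congr 1 <;>
        · refine Finset.prod_congr rfl (fun σ _ => ?_)
          rw [hpt aa _, extBit_self, restr_extBit]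
          simp
    _ = phi d false F z * phi d true F z := by
        rw [phi, phi, Finset.expect_mul_expect, ← Finset.expect_product',
          Finset.univ_product_univ]

/-! ### basic SE lemmas -/

lemma expect_mul_sq_le {α : Type} [Fintype α] [Nonempty α] (f g : α → ℝ) :
    (𝔼 x : α, f x * g x) ^ 2 ≤ (𝔼 x : α, f x ^ 2) * 𝔼 x : α, g x ^ 2 := by
  rw [Fintype.expect_eq_sum_div_card, Fintype.expect_eq_sum_div_card,
    Fintype.expect_eq_sum_div_card]
  rw [div_pow, div_mul_div_comm, ← sq]
  have hc : (0:ℝ) < (Fintype.card α : ℝ) ^ 2 := by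
    have := Fintype.card_pos (α := α); positivity
  rw [div_le_div_iff_of_pos_right hc]
  exact Finset.sum_mul_sq_le_sq_mul_sq univ f g

lemma SE_one : SE (fun (_ : ι → Bool) => (fun (_ : ∀ i, V i) => (1:ℝ))) = 1 := by
  rw [SE]
  simp

lemma SE_nonneg_of_nonneg {F : (ι → Bool) → (∀ i, V i) → ℝ}
    (h : ∀ ω x, 0 ≤ F ω x) : 0 ≤ SE F :=
  Finset.expect_nonneg fun p _ => Finset.prod_nonneg fun ω _ => h ω _

lemma SE_mono {F G : (ι → Bool) → (∀ i, V i) → ℝ}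
    (h0 : ∀ ω x, 0 ≤ F ω x) (h : ∀ ω x, F ω x ≤ G ω x) : SE F ≤ SE G :=
  Finset.expect_le_expect fun p _ => Finset.prod_le_prod
    (fun ω _ => h0 ω _) (fun ω _ => h ω _)

/-! ### bit-setting -/

def setBit (ω : ι → Bool) (d : ι) (b : Bool) : ι → Bool := Function.update ω d b

@[simp] lemma setBit_self (ω : ι → Bool) (d : ι) (b : Bool) : setBit ω d b d = b := by
  simp [setBit]

lemma setBit_ne (ω : ι → Bool) (d : ι) (b : Bool) {i : ι} (h : i ≠ d) :
    setBit ω d b i = ω i := by simp [setBit, Function.update_of_ne h]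

lemma setBit_extBit (d : ι) (b b' : Bool) (σ : {i : ι // i ≠ d} → Bool) :
    setBit (extBit d b σ) d b' = extBit d b' σ := by
  funext i
  by_cases h : i = d
  · subst h; simp
  · rw [setBit_ne _ _ _ h, extBit_ne _ _ _ h, extBit_ne _ _ _ h]

lemma phi_comp (d : ι) (b b' : Bool) (F : (ι → Bool) → (∀ i, V i) → ℝ)
    (z : (∀ i : {i : ι // i ≠ d}, V i) × (∀ i : {i : ι // i ≠ d}, V i)) :
    phi d b (fun ω => F (setBit ω d b')) z = phi d b' F z := by
  rw [phi, phi]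
  refine Finset.expect_congr rfl (fun a _ => Finset.prod_congr rfl (fun σ _ => ?_))
  rw [setBit_extBit]

lemma SE_bit_sq (d : ι) (b : Bool) (F : (ι → Bool) → (∀ i, V i) → ℝ) :
    SE (fun ω => F (setBit ω d b))
      = 𝔼 z : (∀ i : {i : ι // i ≠ d}, V i) × (∀ i : {i : ι // i ≠ d}, V i),
          (phi d b F z) ^ 2 := by
  rw [SE_core d]
  refine Finset.expect_congr rfl (fun z _ => ?_)
  rw [phi_comp, phi_comp, sq]

lemma SE_bit_nonneg (d : ι) (b : Bool) (F : (ι → Bool) → (∀ i, V i) → ℝ) :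
    0 ≤ SE (fun ω => F (setBit ω d b)) := by
  rw [SE_bit_sq]
  exact Finset.expect_nonneg fun z _ => sq_nonneg _

lemma SE_nonneg_of_invariant (d : ι) {F : (ι → Bool) → (∀ i, V i) → ℝ}
    (h : ∀ ω, F ω = F (setBit ω d false)) : 0 ≤ SE F := by
  rw [show F = fun ω => F (setBit ω d false) from funext h]
  exact SE_bit_nonneg d false F

lemma step2 (d : ι) (F : (ι → Bool) → (∀ i, V i) → ℝ) :
    (SE F) ^ 2 ≤ SE (fun ω => F (setBit ω d false)) * SE (fun ω => F (setBit ω d true)) := by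
  rw [SE_core d, SE_bit_sq d false, SE_bit_sq d true]
  exact expect_mul_sq_le _ _

lemma step1 (d : ι) (F G : (ι → Bool) → (∀ i, V i) → ℝ)
    (hF : ∀ ω x a, F ω (Function.update x d a) = F ω x)
    (hG : ∀ ω, ω d = true → G ω = fun _ => 1) :
    (SE (fun ω => fun x => F ω x * G ω x)) ^ 2
      ≤ SE (fun ω => fun x => F ω x * F ω x) * SE (fun ω => G (setBit ω d false)) := by
  have a₀ : V d := Classical.arbitrary (V d)
  have hasm : ∀ (ω : ι → Bool) (a : V d) (z : ∀ i : {i : ι // i ≠ d}, V i),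
      F ω (asm d a z) = F ω (asm d a₀ z) := by
    intro ω a z
    have h' : asm d a z = Function.update (asm d a₀ z) d a := by
      funext i
      by_cases h : i = d
      · subst h; simp
      · rw [Function.update_of_ne h, asm_ne _ _ _ h, asm_ne _ _ _ h]
    rw [h', hF]
  set Z := (∀ i : {i : ι // i ≠ d}, V i) × (∀ i : {i : ι // i ≠ d}, V i)
  set Psi : Bool → Z → ℝ := fun b z =>
    ∏ σ : {i : ι // i ≠ d} → Bool, F (extBit d b σ) (asm d a₀ (mixPoint σ z.1 z.2)) with hPsi
  have hphiFG : ∀ b z, phi d b (fun ω => fun x => F ω x * G ω x) z = Psi b z * phi d b G z := by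
    intro b z
    rw [phi, phi, hPsi]
    calc 𝔼 a : V d, ∏ σ : {i : ι // i ≠ d} → Bool,
          (F (extBit d b σ) (asm d a (mixPoint σ z.1 z.2))
            * G (extBit d b σ) (asm d a (mixPoint σ z.1 z.2)))
        = 𝔼 a : V d, ((∏ σ : {i : ι // i ≠ d} → Bool, F (extBit d b σ) (asm d a₀ (mixPoint σ z.1 z.2)))
            * ∏ σ : {i : ι // i ≠ d} → Bool, G (extBit d b σ) (asm d a (mixPoint σ z.1 z.2))) := by
          refine Finset.expect_congr rfl (fun a _ => ?_)
          rw [Finset.prod_mul_distrib]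
          congr 1
          exact Finset.prod_congr rfl (fun σ _ => hasm _ a _)
      _ = _ := by
          rw [← Finset.mul_expect]
  have hphiFF : ∀ b z, phi d b (fun ω => fun x => F ω x * F ω x) z = Psi b z * Psi b z := by
    intro b z
    rw [phi, hPsi]
    calc 𝔼 a : V d, ∏ σ : {i : ι // i ≠ d} → Bool,
          (F (extBit d b σ) (asm d a (mixPoint σ z.1 z.2))
            * F (extBit d b σ) (asm d a (mixPoint σ z.1 z.2)))
        = 𝔼 _a : V d, ((∏ σ : {i : ι // i ≠ d} → Bool, F (extBit d b σ) (asm d a₀ (mixPoint σ z.1 z.2)))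
            * ∏ σ : {i : ι // i ≠ d} → Bool, F (extBit d b σ) (asm d a₀ (mixPoint σ z.1 z.2))) := by
          refine Finset.expect_congr rfl (fun a _ => ?_)
          rw [Finset.prod_mul_distrib]
          congr 1 <;> exact Finset.prod_congr rfl (fun σ _ => hasm _ a _)
      _ = _ := Finset.expect_const Finset.univ_nonempty _
  have hphiGtrue : ∀ z, phi d true G z = 1 := by
    intro z
    rw [phi]
    have h6 : ∀ (a : V d), (∏ σ : {i : ι // i ≠ d} → Bool,
        G (extBit d true σ) (asm d a (mixPoint σ z.1 z.2))) = 1 := by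
      intro a
      refine Finset.prod_eq_one (fun σ _ => ?_)
      rw [hG _ (extBit_self d true σ)]
    calc 𝔼 a : V d, ∏ σ : {i : ι // i ≠ d} → Bool,
          G (extBit d true σ) (asm d a (mixPoint σ z.1 z.2))
        = 𝔼 _a : V d, (1:ℝ) := Finset.expect_congr rfl (fun a _ => h6 a)
      _ = 1 := Finset.expect_const Finset.univ_nonempty _
  rw [SE_core d (fun ω => fun x => F ω x * G ω x)]
  have h1 : (𝔼 z : Z, phi d false (fun ω => fun x => F ω x * G ω x) z
      * phi d true (fun ω => fun x => F ω x * G ω x) z)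
      = 𝔼 z : Z, (Psi false z * Psi true z) * phi d false G z := by
    refine Finset.expect_congr rfl (fun z _ => ?_)
    rw [hphiFG, hphiFG, hphiGtrue]
    ring
  rw [h1]
  calc (𝔼 z : Z, (Psi false z * Psi true z) * phi d false G z) ^ 2
      ≤ (𝔼 z : Z, (Psi false z * Psi true z) ^ 2) * 𝔼 z : Z, (phi d false G z) ^ 2 :=
        expect_mul_sq_le _ _
    _ = SE (fun ω => fun x => F ω x * F ω x) * SE (fun ω => G (setBit ω d false)) := by
        congr 1
        · rw [SE_core d (fun ω => fun x => F ω x * F ω x)]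
          refine (Finset.expect_congr rfl (fun z _ => ?_)).symm
          rw [hphiFF, hphiFF]
          ring
        · exact (SE_bit_sq d false G).symm

/-! ### merging (Gowers-Cauchy-Schwarz) -/

def mergeOn (D : Finset ι) (τ ω : ι → Bool) : ι → Bool := fun i => if i ∈ D then τ i else ω i

lemma mergeOn_empty (τ ω : ι → Bool) : mergeOn (∅ : Finset ι) τ ω = ω := by
  funext i; simp [mergeOn]

lemma mergeOn_insert (D : Finset ι) (d : ι) (hd : d ∉ D) (τ ω : ι → Bool) :
    mergeOn (insert d D) τ ω = setBit (mergeOn D τ ω) d (τ d) := by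
  funext i
  by_cases h : i = d
  · subst h; simp [mergeOn, hd]
  · rw [setBit_ne _ _ _ h]
    simp only [mergeOn, Finset.mem_insert]
    by_cases hD : i ∈ D <;> simp [hD, h]

lemma mergeOn_congr (D : Finset ι) (τ τ' : ι → Bool) (h : ∀ i ∈ D, τ i = τ' i) :
    mergeOn D τ = mergeOn D τ' := by
  funext ω i
  simp only [mergeOn]
  by_cases hD : i ∈ D
  · simp [hD, h i hD]
  · simp [hD]

lemma merge_pow (D : Finset ι) : ∀ (F : (ι → Bool) → (∀ i, V i) → ℝ),
    ((SE F) ^ 2) ^ (Fintype.card (ι → Bool))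
      ≤ (∏ τ : ι → Bool, SE (fun ω => F (mergeOn D τ ω))) ^ 2 := by
  induction D using Finset.induction_on with
  | empty =>
      intro F
      have h1 : (∏ τ : ι → Bool, SE (fun ω => F (mergeOn (∅ : Finset ι) τ ω)))
          = (SE F) ^ (Fintype.card (ι → Bool)) := by
        rw [← Finset.card_univ, ← Finset.prod_const]
        refine Finset.prod_congr rfl (fun τ _ => ?_)
        have h0 : (fun ω => F (mergeOn (∅ : Finset ι) τ ω)) = F := by
          funext ω; rw [mergeOn_empty]
        rw [h0]
      rw [h1, ← pow_mul, ← pow_mul, mul_comm]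
  | @insert d D hd ih =>
      intro F
      have hfactor_nonneg : ∀ (b : Bool) (τ : ι → Bool),
          0 ≤ SE (fun ω => F (setBit (mergeOn D τ ω) d b)) := by
        intro b τ
        refine SE_nonneg_of_invariant d (fun ω => ?_)
        have harg : setBit (mergeOn D τ (setBit ω d false)) d b
            = setBit (mergeOn D τ ω) d b := by
          funext i
          by_cases h : i = d
          · subst h; simp
          · rw [setBit_ne _ _ _ h, setBit_ne _ _ _ h]
            simp only [mergeOn]
            by_cases hD : i ∈ D
            · simp [hD]
            · simp [hD, setBit_ne _ _ _ h]
        rw [harg]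
      have hco : ∀ (b' : Bool) (σ : {i : ι // i ≠ d} → Bool),
          mergeOn D (extBit d b' σ) = mergeOn D (extBit d false σ) := by
        intro b' σ
        refine mergeOn_congr D _ _ (fun i hi => ?_)
        have hne : i ≠ d := fun h => hd (h ▸ hi)
        rw [extBit_ne _ _ _ hne, extBit_ne _ _ _ hne]
      have key : ∀ b : Bool,
          ((SE (fun ω => F (setBit ω d b))) ^ (Fintype.card (ι → Bool)))
            ≤ (∏ σ : {i : ι // i ≠ d} → Bool,
                SE (fun ω => F (setBit (mergeOn D (extBit d false σ) ω) d b))) ^ 2 := by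
        intro b
        have hYnn : 0 ≤ ∏ σ : {i : ι // i ≠ d} → Bool,
            SE (fun ω => F (setBit (mergeOn D (extBit d false σ) ω) d b)) :=
          Finset.prod_nonneg (fun σ _ => hfactor_nonneg b _)
        have hsplit :
            (∏ τ : ι → Bool, SE (fun ω => F (setBit (mergeOn D τ ω) d b)))
              = (∏ σ : {i : ι // i ≠ d} → Bool,
                  SE (fun ω => F (setBit (mergeOn D (extBit d false σ) ω) d b)))
                * ∏ σ : {i : ι // i ≠ d} → Bool,
                  SE (fun ω => F (setBit (mergeOn D (extBit d false σ) ω) d b)) := by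
          rw [prod_split_bit d (fun τ => SE (fun ω => F (setBit (mergeOn D τ ω) d b)))]
          congr 1
          refine Finset.prod_congr rfl (fun σ _ => ?_)
          rw [hco true σ]
        have hih := ih (fun ω => F (setBit ω d b))
        rw [hsplit] at hih
        have h2 : (((SE (fun ω => F (setBit ω d b))) ^ (Fintype.card (ι → Bool))) ^ 2)
            ≤ ((∏ σ : {i : ι // i ≠ d} → Bool,
                SE (fun ω => F (setBit (mergeOn D (extBit d false σ) ω) d b))) ^ 2) ^ 2 := by
          calc ((SE (fun ω => F (setBit ω d b))) ^ (Fintype.card (ι → Bool))) ^ 2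
              = ((SE (fun ω => F (setBit ω d b))) ^ 2) ^ (Fintype.card (ι → Bool)) := by
                rw [← pow_mul, ← pow_mul, mul_comm]
            _ ≤ _ := by
                refine le_trans hih (le_of_eq ?_)
                ring
        have h3 : (0:ℝ) ≤ (SE (fun ω => F (setBit ω d b))) ^ (Fintype.card (ι → Bool)) :=
          pow_nonneg (SE_bit_nonneg d b F) _
        exact (pow_le_pow_iff_left₀ h3 (sq_nonneg _) two_ne_zero).mp h2
      have hmain : ((SE F) ^ 2) ^ (Fintype.card (ι → Bool))
          ≤ (SE (fun ω => F (setBit ω d false))) ^ (Fintype.card (ι → Bool))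
            * (SE (fun ω => F (setBit ω d true))) ^ (Fintype.card (ι → Bool)) := by
        calc ((SE F) ^ 2) ^ (Fintype.card (ι → Bool))
            ≤ (SE (fun ω => F (setBit ω d false)) * SE (fun ω => F (setBit ω d true)))
                ^ (Fintype.card (ι → Bool)) :=
              pow_le_pow_left₀ (sq_nonneg _) (step2 d F) _
          _ = _ := mul_pow _ _ _
      have hRHS : (∏ τ : ι → Bool, SE (fun ω => F (mergeOn (insert d D) τ ω)))
          = (∏ σ : {i : ι // i ≠ d} → Bool,
              SE (fun ω => F (setBit (mergeOn D (extBit d false σ) ω) d false)))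
            * ∏ σ : {i : ι // i ≠ d} → Bool,
              SE (fun ω => F (setBit (mergeOn D (extBit d false σ) ω) d true)) := by
        calc (∏ τ : ι → Bool, SE (fun ω => F (mergeOn (insert d D) τ ω)))
            = ∏ τ : ι → Bool, SE (fun ω => F (setBit (mergeOn D τ ω) d (τ d))) := by
              refine Finset.prod_congr rfl (fun τ _ => ?_)
              congr 1
              funext ω; rw [mergeOn_insert D d hd]
          _ = _ := by
              rw [prod_split_bit d (fun τ => SE (fun ω => F (setBit (mergeOn D τ ω) d (τ d))))]
              congr 1
              · refine Finset.prod_congr rfl (fun σ _ => ?_)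
                rw [extBit_self]
              · refine Finset.prod_congr rfl (fun σ _ => ?_)
                rw [extBit_self, hco true σ]
      rw [hRHS, mul_pow]
      calc ((SE F) ^ 2) ^ (Fintype.card (ι → Bool))
          ≤ (SE (fun ω => F (setBit ω d false))) ^ (Fintype.card (ι → Bool))
            * (SE (fun ω => F (setBit ω d true))) ^ (Fintype.card (ι → Bool)) := hmain
        _ ≤ (∏ σ : {i : ι // i ≠ d} → Bool,
              SE (fun ω => F (setBit (mergeOn D (extBit d false σ) ω) d false))) ^ 2
            * (∏ σ : {i : ι // i ≠ d} → Bool,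
              SE (fun ω => F (setBit (mergeOn D (extBit d false σ) ω) d true))) ^ 2 :=
            mul_le_mul (key false) (key true)
              (pow_nonneg (SE_bit_nonneg d true F) _) (sq_nonneg _)

/-! ### indicator systems and the padding bound -/

noncomputable def cubeSE (c : ι) (g : (∀ i, V i) → ℝ) : ℝ :=
  SE (fun ω => if ω c = false then g else fun _ => 1)

lemma SE_indicator (Ω : Finset (ι → Bool)) (g : (∀ i, V i) → ℝ) :
    SE (fun ω => if ω ∈ Ω then g else fun _ => 1)
      = 𝔼 p : (∀ i, V i) × (∀ i, V i), ∏ ω ∈ Ω, g (mixPoint ω p.1 p.2) := by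
  rw [SE]
  refine Finset.expect_congr rfl (fun p _ => ?_)
  calc ∏ ω : ι → Bool, (if ω ∈ Ω then g else fun _ => (1:ℝ)) (mixPoint ω p.1 p.2)
      = ∏ ω : ι → Bool, (if ω ∈ Ω then g (mixPoint ω p.1 p.2) else 1) := by
        refine Finset.prod_congr rfl (fun ω _ => ?_)
        exact apply_ite (fun f : (∀ i, V i) → ℝ => f (mixPoint ω p.1 p.2)) _ _ _
    _ = ∏ ω ∈ Ω, g (mixPoint ω p.1 p.2) := Fintype.prod_ite_mem Ω _

lemma pad_bound (c : ι) (g : (∀ i, V i) → ℝ)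
    (hKnn : 0 ≤ cubeSE c g) (hK : cubeSE c g ≤ 1)
    (Ω : Finset (ι → Bool)) (hΩ : ∀ ω ∈ Ω, ω c = false) :
    |SE (fun ω => if ω ∈ Ω then g else fun _ => 1)| ≤ 1 := by
  set F : (ι → Bool) → (∀ i, V i) → ℝ :=
    fun ω => if ω ∈ Ω then g else (fun _ => (1:ℝ)) with hF
  have hm := merge_pow (Finset.univ.erase c) F
  have hfac : ∀ τ : ι → Bool, SE (fun ω => F (mergeOn (Finset.univ.erase c) τ ω))
      = if setBit τ c false ∈ Ω then cubeSE c g else 1 := by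
    intro τ
    have hmerge : ∀ ω : ι → Bool, mergeOn (Finset.univ.erase c) τ ω = setBit τ c (ω c) := by
      intro ω; funext i
      by_cases h : i = c
      · subst h; simp [mergeOn]
      · rw [setBit_ne _ _ _ h]; simp [mergeOn, h]
    by_cases hmem : setBit τ c false ∈ Ω
    · rw [if_pos hmem, cubeSE]
      congr 1
      funext ω
      rw [hmerge ω, hF]
      cases hb : ω c
      · simp [hmem]
      · have hnot : setBit τ c true ∉ Ω := by
          intro hmem'
          have := hΩ _ hmem'
          simp at this
        simp [hnot]
    · rw [if_neg hmem]
      have hone : (fun ω => F (mergeOn (Finset.univ.erase c) τ ω))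
          = fun (_ : ι → Bool) => (fun _ => (1:ℝ)) := by
        funext ω
        rw [hmerge ω, hF]
        cases hb : ω c
        · simp [hmem]
        · have hnot : setBit τ c true ∉ Ω := by
            intro hmem'
            have := hΩ _ hmem'
            simp at this
          simp [hnot]
      rw [hone, SE_one]
  have hfac_nn : ∀ τ : ι → Bool,
      0 ≤ SE (fun ω => F (mergeOn (Finset.univ.erase c) τ ω)) := by
    intro τ
    rw [hfac τ]
    split
    · exact hKnn
    · exact zero_le_one
  have hprod_le : (∏ τ : ι → Bool, SE (fun ω => F (mergeOn (Finset.univ.erase c) τ ω))) ≤ 1 := by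
    refine Finset.prod_le_one (fun τ _ => hfac_nn τ) (fun τ _ => ?_)
    rw [hfac τ]
    split
    · exact hK
    · exact le_refl 1
  have hprod_nn : 0 ≤ ∏ τ : ι → Bool, SE (fun ω => F (mergeOn (Finset.univ.erase c) τ ω)) :=
    Finset.prod_nonneg (fun τ _ => hfac_nn τ)
  have h1 : ((SE F) ^ 2) ^ (Fintype.card (ι → Bool)) ≤ 1 := by
    refine le_trans hm ?_
    calc (∏ τ : ι → Bool, SE (fun ω => F (mergeOn (Finset.univ.erase c) τ ω))) ^ 2
        ≤ 1 ^ 2 := pow_le_pow_left₀ hprod_nn hprod_le 2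
      _ = 1 := one_pow 2
  have h2 : (SE F) ^ 2 ≤ 1 := by
    have hN : Fintype.card (ι → Bool) ≠ 0 := Fintype.card_ne_zero
    exact (pow_le_one_iff_of_nonneg (sq_nonneg _) hN).mp h1
  have h3 : |SE F| ^ 2 ≤ 1 ^ 2 := by
    rw [sq_abs, one_pow]
    exact h2
  exact (pow_le_pow_iff_left₀ (abs_nonneg _) zero_le_one two_ne_zero).mp h3

/-! ### application setting -/

section App

variable {r : ℕ} {V : Fin (r + 1) → Type} [∀ i, Fintype (V i)] [∀ i, Nonempty (V i)]

/-- `ν_j - 1` as a function on the whole product space. -/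
def Gf (ν : ∀ j : Fin (r + 1), EdgeSpace V j → ℝ) (j : Fin (r + 1)) : (∀ i, V i) → ℝ :=
  fun x => ν j (fun i => x i.1) - 1

def pats (B : Finset (Fin (r + 1))) : Finset (Fin (r + 1) → Bool) :=
  Finset.univ.filter (fun ω => ∀ i, i ∉ B → ω i = false)

lemma mem_pats {B : Finset (Fin (r + 1))} {ω : Fin (r + 1) → Bool} :
    ω ∈ pats B ↔ ∀ i, i ∉ B → ω i = false := by simp [pats]

lemma pats_card_le (B : Finset (Fin (r + 1))) : (pats B).card ≤ 2 ^ B.card := by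
  have h := Finset.card_le_card_of_injOn (s := pats B)
    (f := fun (ω : Fin (r + 1) → Bool) => (fun i : {x // x ∈ B} => ω i.1))
    (t := (Finset.univ : Finset ({x // x ∈ B} → Bool)))
    (fun ω _ => Finset.mem_univ _) ?_
  · refine le_trans h ?_
    rw [Finset.card_univ, Fintype.card_fun, Fintype.card_bool, Fintype.card_coe]
  · intro ω₁ h₁ ω₂ h₂ heq
    funext i
    by_cases hi : i ∈ B
    · exact congrFun heq ⟨i, hi⟩
    · rw [(mem_pats.mp h₁) i hi, (mem_pats.mp h₂) i hi]

lemma pats_setBit {B : Finset (Fin (r + 1))} {c : Fin (r + 1)} {ω : Fin (r + 1) → Bool} :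
    setBit ω c false ∈ pats B ↔ ω ∈ pats (insert c B) := by
  rw [mem_pats, mem_pats]
  constructor
  · intro h i hi
    have h1 : i ∉ B := fun hB => hi (Finset.mem_insert_of_mem hB)
    have h2 : i ≠ c := fun hc => hi (hc ▸ Finset.mem_insert_self c B)
    have h3 := h i h1
    rwa [setBit_ne _ _ _ h2] at h3
  · intro h i hi
    by_cases hc : i = c
    · subst hc; simp
    · rw [setBit_ne _ _ _ hc]
      exact h i (fun hins => (Finset.mem_insert.mp hins).elim hc hi)

/-- The state systems of the chain argument. -/
noncomputable def Fsys (ν : ∀ j : Fin (r + 1), EdgeSpace V j → ℝ)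
    (B T : Finset (Fin (r + 1))) : (Fin (r + 1) → Bool) → (∀ i, V i) → ℝ :=
  fun ω => if ω ∈ pats B then (∏ j ∈ T, Gf ν j) else fun _ => 1

lemma comp_bound (ν : ∀ j : Fin (r + 1), EdgeSpace V j → ℝ) (M : ℝ) (hM : 1 ≤ M)
    (hν0 : ∀ j x, 0 ≤ ν j x) (hνM : ∀ j x, ν j x ≤ M)
    (c : Fin (r + 1)) (Bf : Finset (Fin (r + 1))) (hcB : c ∉ Bf)
    (hKnn : 0 ≤ cubeSE c (Gf ν c)) (hKle : cubeSE c (Gf ν c) ≤ 1) :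
    SE (fun ω => fun x => (if ω ∈ pats Bf then Gf ν c else fun _ => (1:ℝ)) x
        * (if ω ∈ pats Bf then Gf ν c else fun _ => (1:ℝ)) x)
      ≤ (3 * (M + 1)) ^ (2 ^ Bf.card) := by
  have hM1 : (0:ℝ) ≤ M + 1 := by linarith
  set pc := (pats Bf).card with hpc
  set S2 := 𝔼 p : (∀ i, V i) × (∀ i, V i),
      ∏ ω ∈ pats Bf, (Gf ν c (mixPoint ω p.1 p.2) + 2) with hS2
  have hstep1 : SE (fun ω => fun x => (if ω ∈ pats Bf then Gf ν c else fun _ => (1:ℝ)) x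
        * (if ω ∈ pats Bf then Gf ν c else fun _ => (1:ℝ)) x)
      ≤ SE (fun ω => if ω ∈ pats Bf then (fun x => (M + 1) * (Gf ν c x + 2))
          else fun _ => (1:ℝ)) := by
    refine SE_mono (fun ω x => ?_) (fun ω x => ?_)
    · by_cases h : ω ∈ pats Bf
      · simp only [h, if_true]
        exact mul_self_nonneg _
      · simp [h]
    · by_cases h : ω ∈ pats Bf
      · simp only [h, if_true]
        have h0 := hν0 c (fun i => x i.1)
        have h1 := hνM c (fun i => x i.1)
        simp only [Gf]
        nlinarith [mul_le_mul_of_nonneg_right h1 h0]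
      · simp [h]
  have hstep2 : SE (fun ω => if ω ∈ pats Bf then (fun x => (M + 1) * (Gf ν c x + 2))
        else fun _ => (1:ℝ))
      = (M + 1) ^ pc * S2 := by
    rw [SE, hS2, Finset.mul_expect]
    refine Finset.expect_congr rfl (fun p _ => ?_)
    calc ∏ ω : Fin (r + 1) → Bool,
          (if ω ∈ pats Bf then (fun x => (M + 1) * (Gf ν c x + 2)) else fun _ => (1:ℝ))
            (mixPoint ω p.1 p.2)
        = ∏ ω : Fin (r + 1) → Bool,
            (if ω ∈ pats Bf then (M + 1) * (Gf ν c (mixPoint ω p.1 p.2) + 2) else 1) := by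
          refine Finset.prod_congr rfl (fun ω _ => ?_)
          exact apply_ite (fun f : (∀ i, V i) → ℝ => f (mixPoint ω p.1 p.2)) _ _ _
      _ = ∏ ω ∈ pats Bf, ((M + 1) * (Gf ν c (mixPoint ω p.1 p.2) + 2)) :=
          Fintype.prod_ite_mem _ _
      _ = (M + 1) ^ pc * ∏ ω ∈ pats Bf, (Gf ν c (mixPoint ω p.1 p.2) + 2) := by
          rw [Finset.prod_mul_distrib, Finset.prod_const]
  have hterm : ∀ Ω ∈ (pats Bf).powerset,
      (𝔼 p : (∀ i, V i) × (∀ i, V i), ∏ ω ∈ Ω, Gf ν c (mixPoint ω p.1 p.2)) ≤ 1 := by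
    intro Ω hΩ
    have hΩc : ∀ ω ∈ Ω, ω c = false := by
      intro ω hω
      have hmem : ω ∈ pats Bf := Finset.mem_powerset.mp hΩ hω
      exact (mem_pats.mp hmem) c hcB
    have hpad := pad_bound c (Gf ν c) hKnn hKle Ω hΩc
    rw [SE_indicator] at hpad
    exact le_trans (le_abs_self _) hpad
  have hstep3 : S2 ≤ 3 ^ pc := by
    have hsum3 : (∑ Ω ∈ (pats Bf).powerset, (2:ℝ) ^ (pats Bf \ Ω).card) = 3 ^ pc := by
      have hpa := Finset.prod_add (fun _ => (1:ℝ)) (fun _ => (2:ℝ)) (pats Bf)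
      simp only [Finset.prod_const, one_pow, one_mul] at hpa
      rw [← hpa]
      norm_num
      exact hpc.symm
    calc S2 = ∑ Ω ∈ (pats Bf).powerset,
          (𝔼 p : (∀ i, V i) × (∀ i, V i), ∏ ω ∈ Ω, Gf ν c (mixPoint ω p.1 p.2))
            * (2:ℝ) ^ (pats Bf \ Ω).card := by
          rw [hS2]
          calc (𝔼 p : (∀ i, V i) × (∀ i, V i),
                ∏ ω ∈ pats Bf, (Gf ν c (mixPoint ω p.1 p.2) + 2))
              = 𝔼 p : (∀ i, V i) × (∀ i, V i), ∑ Ω ∈ (pats Bf).powerset,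
                  (∏ ω ∈ Ω, Gf ν c (mixPoint ω p.1 p.2)) * (2:ℝ) ^ (pats Bf \ Ω).card := by
                refine Finset.expect_congr rfl (fun p _ => ?_)
                rw [Finset.prod_add]
                exact Finset.sum_congr rfl (fun Ω _ => by rw [Finset.prod_const])
            _ = _ := by
                rw [Finset.expect_sum_comm]
                exact Finset.sum_congr rfl (fun Ω _ => by rw [← Finset.expect_mul])
      _ ≤ ∑ Ω ∈ (pats Bf).powerset, (2:ℝ) ^ (pats Bf \ Ω).card := by
          refine Finset.sum_le_sum (fun Ω hΩ => ?_)
          calc (𝔼 p : (∀ i, V i) × (∀ i, V i), ∏ ω ∈ Ω, Gf ν c (mixPoint ω p.1 p.2))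
                * (2:ℝ) ^ (pats Bf \ Ω).card
              ≤ 1 * (2:ℝ) ^ (pats Bf \ Ω).card := by
                refine mul_le_mul_of_nonneg_right (hterm Ω hΩ) (by positivity)
            _ = (2:ℝ) ^ (pats Bf \ Ω).card := one_mul _
      _ = 3 ^ pc := hsum3
  calc SE (fun ω => fun x => (if ω ∈ pats Bf then Gf ν c else fun _ => (1:ℝ)) x
        * (if ω ∈ pats Bf then Gf ν c else fun _ => (1:ℝ)) x)
      ≤ SE (fun ω => if ω ∈ pats Bf then (fun x => (M + 1) * (Gf ν c x + 2))
          else fun _ => (1:ℝ)) := hstep1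
    _ = (M + 1) ^ pc * S2 := hstep2
    _ ≤ (M + 1) ^ pc * 3 ^ pc := mul_le_mul_of_nonneg_left hstep3 (pow_nonneg hM1 _)
    _ = (3 * (M + 1)) ^ pc := by rw [← mul_pow]; ring_nf
    _ ≤ (3 * (M + 1)) ^ (2 ^ Bf.card) := by
        refine pow_le_pow_right₀ (by linarith) (pats_card_le Bf)

lemma chain (ν : ∀ j : Fin (r + 1), EdgeSpace V j → ℝ) (M : ℝ) (hM : 1 ≤ M)
    (hν0 : ∀ j x, 0 ≤ ν j x) (hνM : ∀ j x, ν j x ≤ M)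
    (hcnn : ∀ c : Fin (r + 1), c ≠ 0 → 0 ≤ cubeSE c (Gf ν c))
    (hcle : ∀ c : Fin (r + 1), c ≠ 0 → cubeSE c (Gf ν c) ≤ 1)
    (k : Fin (r + 1)) (hk : k ≠ 0) :
    ∀ (n : ℕ) (B T : Finset (Fin (r + 1))),
      B ⊆ ((Finset.univ.erase 0).erase k) →
      T ⊆ ((Finset.univ.erase 0).erase k) \ B →
      (((Finset.univ.erase 0).erase k) \ B).card = n →
      (SE (Fsys ν (insert 0 B) (insert k T))) ^ (2 ^ n)
        ≤ (3 * (M + 1)) ^ (n * 2 ^ (r - 1)) * cubeSE k (Gf ν k) := by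
  have hC1 : (1:ℝ) ≤ 3 * (M + 1) := by nlinarith
  have hC0 : (0:ℝ) ≤ 3 * (M + 1) := by linarith
  have hKnn := hcnn k hk
  have hAcard : ((Finset.univ.erase (0 : Fin (r+1))).erase k).card = r - 1 := by
    rw [Finset.card_erase_of_mem (Finset.mem_erase.mpr ⟨hk, Finset.mem_univ k⟩),
      Finset.card_erase_of_mem (Finset.mem_univ 0), Finset.card_univ, Fintype.card_fin]
    omega
  intro n
  induction n with
  | zero =>
      intro B T hB hT hcard
      have hsde : ((Finset.univ.erase (0 : Fin (r+1))).erase k) \ B = ∅ :=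
        Finset.card_eq_zero.mp hcard
      have hBA : B = (Finset.univ.erase (0 : Fin (r+1))).erase k :=
        Finset.Subset.antisymm hB (Finset.sdiff_eq_empty_iff_subset.mp hsde)
      have hTe : T = ∅ := by
        rw [hsde] at hT
        exact Finset.subset_empty.mp hT
      subst hBA
      subst hTe
      have hFs : Fsys ν (insert 0 ((Finset.univ.erase (0 : Fin (r+1))).erase k))
            (insert k (∅ : Finset (Fin (r+1))))
          = fun ω => if ω k = false then Gf ν k else fun _ => (1:ℝ) := by
        funext ω
        rw [Fsys]
        have hiffmem : ∀ i : Fin (r + 1),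
            i ∈ insert 0 ((Finset.univ.erase (0 : Fin (r+1))).erase k) ↔ i ≠ k := by
          intro i
          by_cases h0 : i = 0
          · subst h0
            simp [Ne.symm hk]
          · simp [Finset.mem_insert, Finset.mem_erase, h0]
        have hiff : (ω ∈ pats (insert 0 ((Finset.univ.erase (0 : Fin (r+1))).erase k)))
            ↔ (ω k = false) := by
          rw [mem_pats]
          constructor
          · intro h
            refine h k ?_
            rw [hiffmem k]
            simp
          · intro h i hi
            have : i = k := by
              by_contra hik
              exact hi ((hiffmem i).mpr hik)
            rwa [this]
        rw [show insert k (∅ : Finset (Fin (r+1))) = {k} from rfl, Finset.prod_singleton]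
        exact if_congr hiff rfl rfl
      rw [hFs]
      simp only [pow_zero, pow_one, Nat.zero_mul, one_mul]
      exact le_of_eq rfl
  | succ n ih =>
      intro B T hB hT hcard
      have hBcard : B.card + (n + 1) = r - 1 := by
        have hsd := Finset.card_sdiff_of_subset hB
        have hle := Finset.card_le_card hB
        omega
      have h0B : (0 : Fin (r+1)) ∉ B := by
        intro h
        have h2 := hB h
        have h3 := Finset.mem_erase.mp (Finset.mem_erase.mp h2).2
        exact h3.1 rfl
      have hexp : 2 ^ (insert (0 : Fin (r+1)) B).card * 2 ^ n = 2 ^ (r - 1) := by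
        rw [Finset.card_insert_of_notMem h0B, ← pow_add]
        congr 1
        omega
      by_cases hTne : T.Nonempty
      · -- main case: remove a factor
        obtain ⟨c, hcT⟩ := hTne
        have hcA : c ∈ ((Finset.univ.erase (0 : Fin (r+1))).erase k) \ B := hT hcT
        obtain ⟨hcA1, hcB⟩ := Finset.mem_sdiff.mp hcA
        have hck : c ≠ k := (Finset.mem_erase.mp hcA1).1
        have hc0 : c ≠ 0 := (Finset.mem_erase.mp (Finset.mem_erase.mp hcA1).2).1
        have hcnotin : c ∉ insert (0 : Fin (r+1)) B := by
          simp [Finset.mem_insert, hc0, hcB]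
        set Fp : (Fin (r+1) → Bool) → (∀ i, V i) → ℝ :=
          fun ω => if ω ∈ pats (insert 0 B) then Gf ν c else fun _ => 1 with hFp
        set Gp : (Fin (r+1) → Bool) → (∀ i, V i) → ℝ :=
          fun ω => if ω ∈ pats (insert 0 B)
            then (∏ j ∈ insert k (T.erase c), Gf ν j) else fun _ => 1 with hGp
        have hdecomp : Fsys ν (insert 0 B) (insert k T)
            = fun ω => fun x => Fp ω x * Gp ω x := by
          funext ω x
          rw [Fsys, hFp, hGp]
          by_cases h : ω ∈ pats (insert 0 B)
          · simp only [h, if_true]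
            rw [Finset.prod_apply, Finset.prod_apply,
              ← Finset.mul_prod_erase (insert k T) (fun j => Gf ν j x)
                (Finset.mem_insert_of_mem hcT),
              Finset.erase_insert_of_ne (Ne.symm hck)]
          · simp [h]
        have hGf_update : ∀ (x : ∀ i, V i) (a : V c),
            Gf ν c (Function.update x c a) = Gf ν c x := by
          intro x a
          simp only [Gf]
          congr 2
          funext i
          exact Function.update_of_ne i.2 _ _
        have hFhyp : ∀ ω x a, Fp ω (Function.update x c a) = Fp ω x := by
          intro ω x a
          rw [hFp]
          by_cases h : ω ∈ pats (insert 0 B)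
          · simp only [h, if_true]
            exact hGf_update x a
          · simp [h]
        have hGhyp : ∀ ω, ω c = true → Gp ω = fun _ => (1:ℝ) := by
          intro ω hω
          have hnot : ω ∉ pats (insert 0 B) := by
            intro hmem
            have := (mem_pats.mp hmem) c hcnotin
            rw [hω] at this
            exact Bool.noConfusion this
          simp only [hGp]
          rw [if_neg hnot]
        have hstep := step1 c Fp Gp hFhyp hGhyp
        have hGsh : (fun ω => Gp (setBit ω c false))
            = Fsys ν (insert 0 (insert c B)) (insert k (T.erase c)) := by
          funext ω
          rw [hGp, Fsys]
          refine if_congr ?_ rfl rfl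
          rw [pats_setBit, Finset.insert_comm]
        have hB' : insert c B ⊆ ((Finset.univ.erase (0 : Fin (r+1))).erase k) :=
          Finset.insert_subset hcA1 hB
        have hT' : T.erase c ⊆ ((Finset.univ.erase (0 : Fin (r+1))).erase k) \ insert c B := by
          intro i hi
          obtain ⟨hic, hiT⟩ := Finset.mem_erase.mp hi
          obtain ⟨hiA, hiB⟩ := Finset.mem_sdiff.mp (hT hiT)
          refine Finset.mem_sdiff.mpr ⟨hiA, ?_⟩
          simp [Finset.mem_insert, hic, hiB]
        have hcard' : (((Finset.univ.erase (0 : Fin (r+1))).erase k) \ insert c B).card = n := by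
          rw [Finset.sdiff_insert, Finset.card_erase_of_mem hcA, hcard]
          omega
        have hih := ih (insert c B) (T.erase c) hB' hT' hcard'
        have hcomp := comp_bound ν M hM hν0 hνM c (insert 0 B) hcnotin (hcnn c hc0) (hcle c hc0)
        have hcompnn : 0 ≤ SE (fun ω => fun x => Fp ω x * Fp ω x) := by
          refine SE_nonneg_of_nonneg (fun ω x => ?_)
          by_cases h : ω ∈ pats (insert 0 B)
          · simp only [hFp, h, if_true]
            exact mul_self_nonneg _
          · simp [hFp, h]
        have hSE'nn : 0 ≤ SE (Fsys ν (insert 0 (insert c B)) (insert k (T.erase c))) := by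
          rw [← hGsh]
          exact SE_bit_nonneg c false Gp
        have hsq : (SE (Fsys ν (insert 0 B) (insert k T))) ^ 2
            ≤ SE (fun ω => fun x => Fp ω x * Fp ω x)
              * SE (Fsys ν (insert 0 (insert c B)) (insert k (T.erase c))) := by
          rw [hdecomp, ← hGsh]
          exact hstep
        calc (SE (Fsys ν (insert 0 B) (insert k T))) ^ (2 ^ (n + 1))
            = ((SE (Fsys ν (insert 0 B) (insert k T))) ^ 2) ^ (2 ^ n) := by
              rw [← pow_mul, show 2 * 2 ^ n = 2 ^ (n + 1) from by ring]
          _ ≤ (SE (fun ω => fun x => Fp ω x * Fp ω x)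
              * SE (Fsys ν (insert 0 (insert c B)) (insert k (T.erase c)))) ^ (2 ^ n) :=
              pow_le_pow_left₀ (sq_nonneg _) hsq _
          _ = (SE (fun ω => fun x => Fp ω x * Fp ω x)) ^ (2 ^ n)
              * (SE (Fsys ν (insert 0 (insert c B)) (insert k (T.erase c)))) ^ (2 ^ n) :=
              mul_pow _ _ _
          _ ≤ ((3 * (M + 1)) ^ (2 ^ (insert (0 : Fin (r+1)) B).card)) ^ (2 ^ n)
              * ((3 * (M + 1)) ^ (n * 2 ^ (r - 1)) * cubeSE k (Gf ν k)) := by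
              refine mul_le_mul (pow_le_pow_left₀ hcompnn hcomp _) hih
                (pow_nonneg hSE'nn _) (by positivity)
          _ = (3 * (M + 1)) ^ ((n + 1) * 2 ^ (r - 1)) * cubeSE k (Gf ν k) := by
              rw [← pow_mul, hexp, ← mul_assoc, ← pow_add]
              congr 2
              ring
      · -- no factor to remove: plain doubling
        have hTe : T = ∅ := Finset.not_nonempty_iff_eq_empty.mp hTne
        subst hTe
        have hABne : (((Finset.univ.erase (0 : Fin (r+1))).erase k) \ B).Nonempty := by
          rw [← Finset.card_pos, hcard]
          exact Nat.succ_pos n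
        obtain ⟨c, hcA⟩ := hABne
        obtain ⟨hcA1, hcB⟩ := Finset.mem_sdiff.mp hcA
        have hck : c ≠ k := (Finset.mem_erase.mp hcA1).1
        have hc0 : c ≠ 0 := (Finset.mem_erase.mp (Finset.mem_erase.mp hcA1).2).1
        have hcnotin : c ∉ insert (0 : Fin (r+1)) B := by
          simp [Finset.mem_insert, hc0, hcB]
        have hGhyp : ∀ ω, ω c = true →
            Fsys ν (insert 0 B) (insert k ∅) ω = fun _ => (1:ℝ) := by
          intro ω hω
          have hnot : ω ∉ pats (insert 0 B) := by
            intro hmem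
            have := (mem_pats.mp hmem) c hcnotin
            rw [hω] at this
            exact Bool.noConfusion this
          simp only [Fsys]
          rw [if_neg hnot]
        have hstep := step1 c (fun _ => fun _ => (1:ℝ)) (Fsys ν (insert 0 B) (insert k ∅))
          (fun ω x a => rfl) hGhyp
        have hone1 : (fun ω => fun x => (1:ℝ) * (Fsys ν (insert 0 B) (insert k ∅)) ω x)
            = Fsys ν (insert 0 B) (insert k ∅) := by
          funext ω x
          exact one_mul _
        have hone2 : (fun (ω : Fin (r+1) → Bool) => fun (x : ∀ i, V i) => (1:ℝ) * 1)
            = (fun (_ : Fin (r+1) → Bool) => fun (_ : ∀ i, V i) => (1:ℝ)) := by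
          funext ω x
          exact one_mul 1
        rw [hone1, hone2, SE_one, one_mul] at hstep
        have hGsh : (fun ω => Fsys ν (insert 0 B) (insert k ∅) (setBit ω c false))
            = Fsys ν (insert 0 (insert c B)) (insert k ∅) := by
          funext ω
          rw [Fsys, Fsys]
          refine if_congr ?_ rfl rfl
          rw [pats_setBit, Finset.insert_comm]
        rw [hGsh] at hstep
        have hB' : insert c B ⊆ ((Finset.univ.erase (0 : Fin (r+1))).erase k) :=
          Finset.insert_subset hcA1 hB
        have hT' : (∅ : Finset (Fin (r+1))) ⊆
            ((Finset.univ.erase (0 : Fin (r+1))).erase k) \ insert c B :=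
          Finset.empty_subset _
        have hcard' : (((Finset.univ.erase (0 : Fin (r+1))).erase k) \ insert c B).card = n := by
          rw [Finset.sdiff_insert, Finset.card_erase_of_mem hcA, hcard]
          omega
        have hih := ih (insert c B) ∅ hB' hT' hcard'
        have hSE'nn : 0 ≤ SE (Fsys ν (insert 0 (insert c B)) (insert k ∅)) := by
          rw [← hGsh]
          exact SE_bit_nonneg c false _
        calc (SE (Fsys ν (insert 0 B) (insert k ∅))) ^ (2 ^ (n + 1))
            = ((SE (Fsys ν (insert 0 B) (insert k ∅))) ^ 2) ^ (2 ^ n) := by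
              rw [← pow_mul, show 2 * 2 ^ n = 2 ^ (n + 1) from by ring]
          _ ≤ (SE (Fsys ν (insert 0 (insert c B)) (insert k ∅))) ^ (2 ^ n) :=
              pow_le_pow_left₀ (sq_nonneg _) hstep _
          _ ≤ (3 * (M + 1)) ^ (n * 2 ^ (r - 1)) * cubeSE k (Gf ν k) := hih
          _ ≤ (3 * (M + 1)) ^ ((n + 1) * 2 ^ (r - 1)) * cubeSE k (Gf ν k) := by
              refine mul_le_mul_of_nonneg_right ?_ hKnn
              refine pow_le_pow_right₀ hC1 ?_
              have : n ≤ n + 1 := Nat.le_succ n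
              exact Nat.mul_le_mul_right _ this


/-! ### identification with the box norm -/

lemma expect_res {ι : Type} [Fintype ι] [DecidableEq ι] {V : ι → Type}
    [∀ i, Fintype (V i)] [∀ i, Nonempty (V i)] (c : ι)
    (u : (∀ i : {i : ι // i ≠ c}, V i) → ℝ) :
    (𝔼 x : ∀ i, V i, u (res c x)) = 𝔼 z : (∀ i : {i : ι // i ≠ c}, V i), u z := by
  have h1 : (𝔼 x : ∀ i, V i, u (res c x))
      = 𝔼 q : V c × (∀ i : {i : ι // i ≠ c}, V i), u q.2 :=
    Finset.expect_equiv (Equiv.piSplitAt c V) (by simp) (fun x _ => rfl)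
  rw [h1, ← Finset.univ_product_univ, Finset.expect_product]
  simp only []
  rw [Finset.expect_congr rfl (fun a _ => Finset.expect_congr rfl (fun z _ => rfl))]
  exact Finset.expect_const Finset.univ_nonempty _

lemma cubeSE_eq_box {ι : Type} [Fintype ι] [DecidableEq ι] {V : ι → Type}
    [∀ i, Fintype (V i)] [∀ i, Nonempty (V i)] (c : ι) (g : (∀ i : {i : ι // i ≠ c}, V i) → ℝ) :
    cubeSE c (fun x => g (res c x))
      = 𝔼 x₀ : (∀ i : {i : ι // i ≠ c}, V i), 𝔼 x₁ : (∀ i : {i : ι // i ≠ c}, V i),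
          ∏ σ : {i : ι // i ≠ c} → Bool, g (mixPoint σ x₀ x₁) := by
  have hpoint : ∀ (p : (∀ i, V i) × (∀ i, V i)),
      (∏ ω : ι → Bool, (if ω c = false then (fun x => g (res c x)) else fun _ => (1:ℝ))
          (mixPoint ω p.1 p.2))
        = ∏ σ : {i : ι // i ≠ c} → Bool, g (mixPoint σ (res c p.1) (res c p.2)) := by
    intro p
    calc (∏ ω : ι → Bool, (if ω c = false then (fun x => g (res c x)) else fun _ => (1:ℝ))
            (mixPoint ω p.1 p.2))
        = ∏ ω : ι → Bool, (if ω c = false then g (res c (mixPoint ω p.1 p.2)) else 1) := by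
          refine Finset.prod_congr rfl (fun ω _ => ?_)
          exact apply_ite (fun f : (∀ i, V i) → ℝ => f (mixPoint ω p.1 p.2)) _ _ _
      _ = ∏ ω ∈ Finset.univ.filter (fun ω : ι → Bool => ω c = false),
            g (res c (mixPoint ω p.1 p.2)) := by
          rw [Finset.prod_filter]
      _ = ∏ σ : {i : ι // i ≠ c} → Bool, g (mixPoint σ (res c p.1) (res c p.2)) := by
          refine Finset.prod_nbij' (fun ω => restr c ω) (fun σ => extBit c false σ)
            (fun ω _ => Finset.mem_univ _) (fun σ _ => ?_) (fun ω hω => ?_) (fun σ _ => ?_)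
            (fun ω hω => ?_)
          · rw [Finset.mem_filter]
            exact ⟨Finset.mem_univ _, extBit_self c false σ⟩
          · -- extBit c false (restr c ω) = ω
            have hc : ω c = false := (Finset.mem_filter.mp hω).2
            funext i
            show extBit c false (restr c ω) i = ω i
            by_cases h : i = c
            · subst h; rw [extBit_self, hc]
            · rw [extBit_ne _ _ _ h]; rfl
          · exact restr_extBit c false σ
          · -- g (res c (mixPoint ω p.1 p.2)) = g (mixPoint (restr c ω) (res c p.1) (res c p.2))
            congr 1
      _ = _ := rfl
  rw [cubeSE, SE]
  rw [Finset.expect_congr rfl (fun p _ => hpoint p)]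
  rw [← Finset.univ_product_univ, Finset.expect_product]
  calc (𝔼 x : ∀ i, V i, 𝔼 y : ∀ i, V i,
        ∏ σ : {i : ι // i ≠ c} → Bool, g (mixPoint σ (res c x) (res c y)))
      = 𝔼 x : ∀ i, V i, 𝔼 z₁ : (∀ i : {i : ι // i ≠ c}, V i),
          ∏ σ : {i : ι // i ≠ c} → Bool, g (mixPoint σ (res c x) z₁) := by
        refine Finset.expect_congr rfl (fun x _ => ?_)
        exact expect_res c (fun z₁ => ∏ σ : {i : ι // i ≠ c} → Bool, g (mixPoint σ (res c x) z₁))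
    _ = _ := by
        refine expect_res c (fun z₀ => 𝔼 z₁ : (∀ i : {i : ι // i ≠ c}, V i),
          ∏ σ : {i : ι // i ≠ c} → Bool, g (mixPoint σ z₀ z₁))

lemma cubeSE_nonneg {ι : Type} [Fintype ι] [DecidableEq ι] {V : ι → Type}
    [∀ i, Fintype (V i)] [∀ i, Nonempty (V i)] (c d : ι) (hdc : c ≠ d)
    (g : (∀ i, V i) → ℝ) : 0 ≤ cubeSE c g := by
  refine SE_nonneg_of_invariant d (fun ω => ?_)
  have : setBit ω d false c = ω c := setBit_ne ω d false hdc
  rw [this]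

/-! ### the initial state -/

lemma Gf_asm (ν : ∀ j : Fin (r + 1), EdgeSpace V j → ℝ) (j : Fin (r + 1)) (a : V 0)
    (z : EdgeSpace V 0) :
    Gf ν j (asm 0 a z) = ν j (glue j a z) - 1 := by
  rw [Gf]
  have harg : (fun i : {i : Fin (r+1) // i ≠ j} => asm (0 : Fin (r+1)) a z i.1)
      = glue j a z := by
    funext i
    obtain ⟨i', hij⟩ := i
    by_cases h : i' = 0
    · subst h
      show asm (0 : Fin (r+1)) a z 0 = glue j a z ⟨0, hij⟩
      rw [asm_self]
      simp [glue]
    · show asm (0 : Fin (r+1)) a z i' = glue j a z ⟨i', hij⟩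
      rw [asm_ne _ _ _ h]
      simp [glue, h]
  rw [harg]

lemma init_eq (ν : ∀ j : Fin (r + 1), EdgeSpace V j → ℝ) (S : Finset (Fin (r + 1))) :
    SE (Fsys ν (insert (0 : Fin (r+1)) ∅) S)
      = 𝔼 y : EdgeSpace V 0, (𝔼 u : V 0, ∏ j ∈ S, (ν j (glue j u y) - 1)) ^ 2 := by
  rw [SE_core (0 : Fin (r+1))]
  have hphi : ∀ (b : Bool) (z : EdgeSpace V 0 × EdgeSpace V 0),
      phi (0 : Fin (r+1)) b (Fsys ν (insert 0 ∅) S) z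
        = 𝔼 u : V 0, ∏ j ∈ S, (ν j (glue j u z.1) - 1) := by
    intro b z
    rw [phi]
    refine Finset.expect_congr rfl (fun a _ => ?_)
    have hmain : ∀ σ : {i : Fin (r+1) // i ≠ 0} → Bool, σ ≠ (fun _ => false) →
        Fsys ν (insert 0 ∅) S (extBit 0 b σ) (asm 0 a (mixPoint σ z.1 z.2)) = 1 := by
      intro σ hσ
      have hnot : extBit (0 : Fin (r+1)) b σ ∉ pats (insert 0 ∅) := by
        intro hmem
        apply hσ
        funext i
        have h1 := (mem_pats.mp hmem) i.1 (by simp [i.2])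
        rw [extBit_ne _ _ _ i.2] at h1
        exact h1
      simp only [Fsys]
      rw [if_neg hnot]
    have hval : Fsys ν (insert 0 ∅) S (extBit 0 b (fun _ => false))
        (asm 0 a (mixPoint (fun _ : {i : Fin (r+1) // i ≠ 0} => false) z.1 z.2))
        = ∏ j ∈ S, (ν j (glue j a z.1) - 1) := by
      have hmem : extBit (0 : Fin (r+1)) b (fun _ => false) ∈ pats (insert 0 ∅) := by
        rw [mem_pats]
        intro i hi
        have hi0 : i ≠ 0 := by
          intro h
          exact hi (by rw [h]; exact Finset.mem_insert_self 0 ∅)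
        rw [extBit_ne _ _ _ hi0]
      have hmix : mixPoint (fun _ : {i : Fin (r+1) // i ≠ 0} => false) z.1 z.2 = z.1 := by
        funext i; rfl
      simp only [Fsys]
      rw [if_pos hmem, hmix, Finset.prod_apply]
      exact Finset.prod_congr rfl (fun j _ => Gf_asm ν j a z.1)
    calc ∏ σ : {i : Fin (r+1) // i ≠ 0} → Bool,
          Fsys ν (insert 0 ∅) S (extBit 0 b σ) (asm 0 a (mixPoint σ z.1 z.2))
        = Fsys ν (insert 0 ∅) S (extBit 0 b (fun _ => false))
            (asm 0 a (mixPoint (fun _ : {i : Fin (r+1) // i ≠ 0} => false) z.1 z.2)) :=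
          Finset.prod_eq_single _ (fun σ _ hσ => hmain σ hσ)
            (fun h => absurd (Finset.mem_univ _) h)
      _ = _ := hval
  calc (𝔼 z : EdgeSpace V 0 × EdgeSpace V 0,
        phi (0 : Fin (r+1)) false (Fsys ν (insert 0 ∅) S) z
          * phi (0 : Fin (r+1)) true (Fsys ν (insert 0 ∅) S) z)
      = 𝔼 z : EdgeSpace V 0 × EdgeSpace V 0,
          (𝔼 u : V 0, ∏ j ∈ S, (ν j (glue j u z.1) - 1)) ^ 2 := by
        refine Finset.expect_congr rfl (fun z _ => ?_)
        rw [hphi false z, hphi true z, sq]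
    _ = _ := by
        rw [← Finset.univ_product_univ, Finset.expect_product]
        refine Finset.expect_congr rfl (fun z₁ _ => ?_)
        calc (𝔼 z₂ : EdgeSpace V 0,
              (𝔼 u : V 0, ∏ j ∈ S, (ν j (glue j u (z₁, z₂).1) - 1)) ^ 2)
            = 𝔼 z₂ : EdgeSpace V 0,
              (𝔼 u : V 0, ∏ j ∈ S, (ν j (glue j u z₁) - 1)) ^ 2 :=
              Finset.expect_congr rfl (fun z₂ _ => rfl)
          _ = _ := Finset.expect_const Finset.univ_nonempty _

/-! ### box norm bound -/

lemma cubeSE_le_pow (ν : ∀ j : Fin (r + 1), EdgeSpace V j → ℝ) (c : Fin (r + 1)) (hc : c ≠ 0)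
    (β : ℝ) (hβ : 0 ≤ β)
    (hbox : boxNorm (fun z : EdgeSpace V c => ν c z - 1) ≤ β) :
    cubeSE c (Gf ν c) ≤ β ^ (2 ^ r) := by
  have hnn : 0 ≤ cubeSE c (Gf ν c) := cubeSE_nonneg c 0 hc _
  have hcard : Fintype.card {i : Fin (r + 1) // i ≠ c} = r := by
    have h1 := Fintype.card_subtype_compl (fun i : Fin (r + 1) => i = c)
    have h2 : Fintype.card {i : Fin (r + 1) // i = c} = 1 := Fintype.card_subtype_eq c
    rw [h2, Fintype.card_fin] at h1
    rw [h1]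
    omega
  have hW := cubeSE_eq_box c (fun z : EdgeSpace V c => ν c z - 1)
  have hbn : boxNorm (fun z : EdgeSpace V c => ν c z - 1)
      = (cubeSE c (Gf ν c)) ^ ((1:ℝ) / 2 ^ r) := by
    rw [boxNorm, hcard]
    congr 1
    rw [← hW]
    rfl
  have h2r : ((1:ℝ) / 2 ^ r) * ((2 ^ r : ℕ) : ℝ) = 1 := by
    push_cast
    field_simp
  have hpow : cubeSE c (Gf ν c)
      = (boxNorm (fun z : EdgeSpace V c => ν c z - 1)) ^ (2 ^ r : ℕ) := by
    rw [hbn, ← Real.rpow_natCast ((cubeSE c (Gf ν c)) ^ ((1:ℝ) / 2 ^ r)) (2 ^ r),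
      ← Real.rpow_mul hnn, h2r, Real.rpow_one]
  rw [hpow]
  refine pow_le_pow_left₀ ?_ hbox _
  rw [hbn]
  exact Real.rpow_nonneg hnn _

/-! ### L² triangle inequality -/

lemma sq_le_imp_le {x c : ℝ} (h : x ^ 2 ≤ c ^ 2) (hc : 0 ≤ c) : x ≤ c := by
  by_contra hlt
  push_neg at hlt
  nlinarith [h, hc, hlt]

lemma l2tri {Y : Type} [Fintype Y] [Nonempty Y] {κ : Type} [DecidableEq κ] (s : Finset κ)
    (Γ : κ → Y → ℝ) (b : ℝ) (hb : 0 ≤ b)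
    (h : ∀ S ∈ s, (𝔼 y : Y, (Γ S y) ^ 2) ≤ b ^ 2) :
    (𝔼 y : Y, (∑ S ∈ s, Γ S y) ^ 2) ≤ ((s.card : ℝ) * b) ^ 2 := by
  induction s using Finset.induction_on with
  | empty => simp
  | @insert a s ha ih =>
      have hs := ih (fun S hS => h S (Finset.mem_insert_of_mem hS))
      have hA : (𝔼 y : Y, (Γ a y) ^ 2) ≤ b ^ 2 := h a (Finset.mem_insert_self a s)
      have hAnn : 0 ≤ 𝔼 y : Y, (Γ a y) ^ 2 := Finset.expect_nonneg fun y _ => sq_nonneg _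
      have hSnn : 0 ≤ 𝔼 y : Y, (∑ S ∈ s, Γ S y) ^ 2 :=
        Finset.expect_nonneg fun y _ => sq_nonneg _
      have hcross : (𝔼 y : Y, Γ a y * ∑ S ∈ s, Γ S y) ≤ b * ((s.card : ℝ) * b) := by
        refine sq_le_imp_le ?_ (by positivity)
        calc (𝔼 y : Y, Γ a y * ∑ S ∈ s, Γ S y) ^ 2
            ≤ (𝔼 y : Y, (Γ a y) ^ 2) * (𝔼 y : Y, (∑ S ∈ s, Γ S y) ^ 2) :=
              expect_mul_sq_le _ _
          _ ≤ b ^ 2 * ((s.card : ℝ) * b) ^ 2 := mul_le_mul hA hs hSnn (sq_nonneg _)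
          _ = (b * ((s.card : ℝ) * b)) ^ 2 := by ring
      have hexpand : (𝔼 y : Y, (∑ S ∈ insert a s, Γ S y) ^ 2)
          = (𝔼 y : Y, (Γ a y) ^ 2) + ((𝔼 y : Y, 2 * (Γ a y * ∑ S ∈ s, Γ S y))
            + 𝔼 y : Y, (∑ S ∈ s, Γ S y) ^ 2) := by
        rw [← Finset.expect_add_distrib, ← Finset.expect_add_distrib]
        refine Finset.expect_congr rfl (fun y _ => ?_)
        rw [Finset.sum_insert ha]
        ring
      have h2 : (𝔼 y : Y, 2 * (Γ a y * ∑ S ∈ s, Γ S y))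
          = 2 * 𝔼 y : Y, Γ a y * ∑ S ∈ s, Γ S y := (Finset.mul_expect _ _ _).symm
      rw [hexpand, h2, Finset.card_insert_of_notMem ha]
      push_cast
      nlinarith [hA, hs, hcross, hb, (by positivity : (0:ℝ) ≤ (s.card : ℝ))]

/-! ### expansion of the product -/

lemma expand_eq (ν : ∀ j : Fin (r + 1), EdgeSpace V j → ℝ) (y : EdgeSpace V 0) :
    (𝔼 u : V 0, ∏ j : {j : Fin (r + 1) // j ≠ 0}, ν j (glue j u y)) - 1
      = ∑ S ∈ (Finset.univ.erase (0 : Fin (r + 1))).powerset.erase ∅,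
          𝔼 u : V 0, ∏ j ∈ S, (ν j (glue j u y) - 1) := by
  have h1 : ∀ u : V 0, (∏ j : {j : Fin (r + 1) // j ≠ 0}, ν j (glue j u y))
      = ∑ S ∈ (Finset.univ.erase (0 : Fin (r + 1))).powerset,
          ∏ j ∈ S, (ν j (glue j u y) - 1) := by
    intro u
    rw [← Finset.prod_subtype (Finset.univ.erase (0 : Fin (r + 1)))
      (fun j => by simp [Finset.mem_erase]) (fun j => ν j (glue j u y))]
    calc ∏ j ∈ Finset.univ.erase (0 : Fin (r + 1)), ν j (glue j u y)
        = ∏ j ∈ Finset.univ.erase (0 : Fin (r + 1)), ((ν j (glue j u y) - 1) + 1) := by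
          refine Finset.prod_congr rfl (fun j _ => by ring)
      _ = ∑ S ∈ (Finset.univ.erase (0 : Fin (r + 1))).powerset,
            (∏ j ∈ S, (ν j (glue j u y) - 1))
              * ∏ j ∈ (Finset.univ.erase (0 : Fin (r + 1))) \ S, 1 :=
          Finset.prod_add _ _ _
      _ = _ := by
          refine Finset.sum_congr rfl (fun S _ => ?_)
          rw [Finset.prod_const_one, mul_one]
  rw [Finset.expect_congr rfl (fun u _ => h1 u), Finset.expect_sum_comm]
  have hmemE : (∅ : Finset (Fin (r + 1))) ∈ (Finset.univ.erase (0 : Fin (r + 1))).powerset :=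
    Finset.mem_powerset.mpr (Finset.empty_subset _)
  rw [← Finset.add_sum_erase _
    (fun S => 𝔼 u : V 0, ∏ j ∈ S, (ν j (glue j u y) - 1)) hmemE]
  have hEmpty : (𝔼 u : V 0, ∏ j ∈ (∅ : Finset (Fin (r + 1))), (ν j (glue j u y) - 1)) = 1 := by
    simp
  rw [hEmpty]
  ring

end App

end BoxProof


open BoxProof

/-- If `‖ν_e − 1‖_{U^e} ≤ δ·‖ν‖_∞^{−(r−1)}` for all edges, then the density
`ν'_{e₀}(x_{e₀}) = 𝔼[∏_{e ≠ e₀} ν_e(x_e) | x₀ ∈ V₀]` is close to `1` in mean square. -/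
theorem nu_prime_close_to_one (r : ℕ) (hr : 2 ≤ r) (ε : ℝ) (hε : 0 < ε) :
    ∃ δ : ℝ, 0 < δ ∧
      ∀ (V : Fin (r + 1) → Type) [∀ i, Fintype (V i)] [∀ i, Nonempty (V i)]
        (ν : ∀ j : Fin (r + 1), EdgeSpace V j → ℝ),
        (∀ j x, 0 ≤ ν j x) → 1 ≤ hypSup V ν →
        (∀ j : Fin (r + 1),
          boxNorm (fun z : EdgeSpace V j => ν j z - 1) ≤ δ * (hypSup V ν ^ (r - 1))⁻¹) →
        𝔼 y : EdgeSpace V 0,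
          ((𝔼 x₀ : V 0, ∏ j : {j : Fin (r + 1) // j ≠ 0},
              ν j (glue (j : Fin (r + 1)) x₀ y)) - 1) ^ 2 ≤ ε := by
  classical
  have hKpos : (0:ℝ) < (2:ℝ) ^ r * 6 ^ r := by positivity
  refine ⟨min 1 (Real.sqrt ε / ((2:ℝ) ^ r * 6 ^ r)),
    lt_min one_pos (div_pos (Real.sqrt_pos.mpr hε) hKpos), ?_⟩
  set δ : ℝ := min 1 (Real.sqrt ε / ((2:ℝ) ^ r * 6 ^ r)) with hδdef
  have hδpos : 0 < δ := lt_min one_pos (div_pos (Real.sqrt_pos.mpr hε) hKpos)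
  have hδ1 : δ ≤ 1 := min_le_left _ _
  intro V _ _ ν hν0 hM hbox
  set M := hypSup V ν with hMdef
  have hM0 : (0:ℝ) < M := lt_of_lt_of_le one_pos hM
  have hνM : ∀ j x, ν j x ≤ M := by
    intro j x
    calc ν j x ≤ ⨆ x' : EdgeSpace V j, ν j x' :=
          le_ciSup (Set.Finite.bddAbove (Set.finite_range _)) x
      _ ≤ ⨆ j', ⨆ x' : EdgeSpace V j', ν j' x' :=
          le_ciSup (f := fun j' => ⨆ x' : EdgeSpace V j', ν j' x')
            (Set.Finite.bddAbove (Set.finite_range _)) j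
  set β : ℝ := δ * (M ^ (r - 1))⁻¹ with hβdef
  have hβnn : 0 ≤ β := by positivity
  have hβ1 : β ≤ 1 := by
    have h1 : (M ^ (r - 1))⁻¹ ≤ 1 := by
      rw [inv_le_one_iff₀]
      right
      exact one_le_pow₀ hM
    calc β = δ * (M ^ (r - 1))⁻¹ := rfl
      _ ≤ 1 * 1 := mul_le_mul hδ1 h1 (by positivity) zero_le_one
      _ = 1 := mul_one 1
  have hcle : ∀ c : Fin (r + 1), c ≠ 0 → cubeSE c (Gf ν c) ≤ β ^ (2 ^ r) :=
    fun c hc => cubeSE_le_pow ν c hc β hβnn (hbox c)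
  have hcle1 : ∀ c : Fin (r + 1), c ≠ 0 → cubeSE c (Gf ν c) ≤ 1 :=
    fun c hc => le_trans (hcle c hc) (pow_le_one₀ hβnn hβ1)
  have hcnn : ∀ c : Fin (r + 1), c ≠ 0 → 0 ≤ cubeSE c (Gf ν c) :=
    fun c hc => cubeSE_nonneg c 0 hc _
  set bS : ℝ := 6 ^ r * δ with hbS
  have hbSnn : 0 ≤ bS := by positivity
  have h2r1 : (2:ℕ) ^ r = 2 * 2 ^ (r - 1) := by
    rw [← pow_succ']
    congr 1
    omega
  have hperS : ∀ S ∈ ((Finset.univ.erase (0 : Fin (r + 1))).powerset.erase ∅),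
      (𝔼 y : EdgeSpace V 0, (𝔼 u : V 0, ∏ j ∈ S, (ν j (glue j u y) - 1)) ^ 2) ≤ bS ^ 2 := by
    intro S hS
    obtain ⟨hSne, hSsub⟩ := Finset.mem_erase.mp hS
    have hSsub' : S ⊆ Finset.univ.erase (0 : Fin (r + 1)) := Finset.mem_powerset.mp hSsub
    obtain ⟨k, hkS⟩ := Finset.nonempty_of_ne_empty hSne
    have hk0 : k ≠ 0 := (Finset.mem_erase.mp (hSsub' hkS)).1
    have hT : S.erase k ⊆ ((Finset.univ.erase (0 : Fin (r + 1))).erase k) \ ∅ := by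
      rw [Finset.sdiff_empty]
      intro i hi
      obtain ⟨hik, hiS⟩ := Finset.mem_erase.mp hi
      exact Finset.mem_erase.mpr ⟨hik, hSsub' hiS⟩
    have hcard : ((((Finset.univ.erase (0 : Fin (r + 1))).erase k) \ ∅)).card = r - 1 := by
      rw [Finset.sdiff_empty,
        Finset.card_erase_of_mem (Finset.mem_erase.mpr ⟨hk0, Finset.mem_univ k⟩),
        Finset.card_erase_of_mem (Finset.mem_univ 0), Finset.card_univ, Fintype.card_fin]
      omega
    have hchain := chain ν M hM hν0 hνM hcnn hcle1 k hk0
      (r - 1) ∅ (S.erase k) (Finset.empty_subset _) hT hcard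
    rw [Finset.insert_erase hkS] at hchain
    rw [← init_eq ν S]
    have hE0nn : 0 ≤ SE (Fsys ν (insert (0 : Fin (r + 1)) ∅) S) := by
      rw [init_eq ν S]
      exact Finset.expect_nonneg fun y _ => sq_nonneg _
    have hKle : cubeSE k (Gf ν k) ≤ β ^ (2 ^ r) := hcle k hk0
    have hchain2 : (SE (Fsys ν (insert (0 : Fin (r + 1)) ∅) S)) ^ (2 ^ (r - 1))
        ≤ (3 * (M + 1)) ^ ((r - 1) * 2 ^ (r - 1)) * β ^ (2 ^ r) :=
      le_trans hchain (mul_le_mul_of_nonneg_left hKle (by positivity))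
    have harith : (3 * (M + 1)) ^ ((r - 1) * 2 ^ (r - 1)) * β ^ (2 ^ r)
        ≤ (6 ^ (r - 1) * δ ^ 2) ^ (2 ^ (r - 1)) := by
      have hMle : (3 * (M + 1)) ≤ 6 * M := by linarith
      have hMexp : M ^ ((r - 1) * 2 ^ (r - 1)) * (M ^ ((r - 1) * 2 ^ r))⁻¹ ≤ 1 := by
        have hle : M ^ ((r - 1) * 2 ^ (r - 1)) ≤ M ^ ((r - 1) * 2 ^ r) := by
          refine pow_le_pow_right₀ hM ?_
          refine Nat.mul_le_mul_left _ ?_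
          exact Nat.pow_le_pow_right (by norm_num) (by omega)
        calc M ^ ((r - 1) * 2 ^ (r - 1)) * (M ^ ((r - 1) * 2 ^ r))⁻¹
            ≤ M ^ ((r - 1) * 2 ^ r) * (M ^ ((r - 1) * 2 ^ r))⁻¹ :=
              mul_le_mul_of_nonneg_right hle (by positivity)
          _ = 1 := mul_inv_cancel₀ (by positivity)
      calc (3 * (M + 1)) ^ ((r - 1) * 2 ^ (r - 1)) * β ^ (2 ^ r)
          ≤ (6 * M) ^ ((r - 1) * 2 ^ (r - 1)) * β ^ (2 ^ r) :=
            mul_le_mul_of_nonneg_right (pow_le_pow_left₀ (by linarith) hMle _) (by positivity)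
        _ = 6 ^ ((r - 1) * 2 ^ (r - 1)) * δ ^ (2 ^ r)
            * (M ^ ((r - 1) * 2 ^ (r - 1)) * (M ^ ((r - 1) * 2 ^ r))⁻¹) := by
            rw [hβdef, mul_pow, mul_pow, inv_pow, ← pow_mul]
            ring
        _ ≤ 6 ^ ((r - 1) * 2 ^ (r - 1)) * δ ^ (2 ^ r) * 1 :=
            mul_le_mul_of_nonneg_left hMexp (by positivity)
        _ = (6 ^ (r - 1)) ^ (2 ^ (r - 1)) * (δ ^ 2) ^ (2 ^ (r - 1)) := by
            rw [mul_one, ← pow_mul, ← pow_mul, h2r1]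
        _ = (6 ^ (r - 1) * δ ^ 2) ^ (2 ^ (r - 1)) := (mul_pow _ _ _).symm
    have hfin : SE (Fsys ν (insert (0 : Fin (r + 1)) ∅) S) ≤ 6 ^ (r - 1) * δ ^ 2 := by
      have h2 := le_trans hchain2 harith
      have hne : (2:ℕ) ^ (r - 1) ≠ 0 := by positivity
      exact (pow_le_pow_iff_left₀ hE0nn (by positivity) hne).mp h2
    calc SE (Fsys ν (insert (0 : Fin (r + 1)) ∅) S) ≤ 6 ^ (r - 1) * δ ^ 2 := hfin
      _ ≤ (6 ^ r) ^ 2 * δ ^ 2 := by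
          refine mul_le_mul_of_nonneg_right ?_ (sq_nonneg δ)
          rw [← pow_mul]
          exact pow_le_pow_right₀ (by norm_num) (by omega)
      _ = bS ^ 2 := by rw [hbS]; ring
  have hmain := l2tri ((Finset.univ.erase (0 : Fin (r + 1))).powerset.erase ∅)
      (fun S y => 𝔼 u : V 0, ∏ j ∈ S, (ν j (glue j u y) - 1)) bS hbSnn hperS
  have hgoal_eq : (𝔼 y : EdgeSpace V 0,
        ((𝔼 x₀ : V 0, ∏ j : {j : Fin (r + 1) // j ≠ 0},
            ν j (glue (j : Fin (r + 1)) x₀ y)) - 1) ^ 2)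
      = 𝔼 y : EdgeSpace V 0,
          (∑ S ∈ (Finset.univ.erase (0 : Fin (r + 1))).powerset.erase ∅,
            𝔼 u : V 0, ∏ j ∈ S, (ν j (glue j u y) - 1)) ^ 2 :=
    Finset.expect_congr rfl (fun y _ => by rw [expand_eq ν y])
  rw [hgoal_eq]
  refine le_trans hmain ?_
  have hcardS : (((Finset.univ.erase (0 : Fin (r + 1))).powerset.erase ∅).card : ℝ)
      ≤ (2:ℝ) ^ r := by
    have h1 : ((Finset.univ.erase (0 : Fin (r + 1))).powerset.erase ∅).card ≤ 2 ^ r := by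
      calc ((Finset.univ.erase (0 : Fin (r + 1))).powerset.erase ∅).card
          ≤ ((Finset.univ.erase (0 : Fin (r + 1))).powerset).card :=
            Finset.card_le_card (Finset.erase_subset _ _)
        _ = 2 ^ ((Finset.univ.erase (0 : Fin (r + 1))).card) := Finset.card_powerset _
        _ = 2 ^ r := by
            rw [Finset.card_erase_of_mem (Finset.mem_univ 0), Finset.card_univ,
              Fintype.card_fin, Nat.add_sub_cancel]
    exact_mod_cast h1
  have hb3 : ((((Finset.univ.erase (0 : Fin (r + 1))).powerset.erase ∅).card : ℝ) * bS)
      ≤ Real.sqrt ε := by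
    have hδle : δ ≤ Real.sqrt ε / ((2:ℝ) ^ r * 6 ^ r) := min_le_right _ _
    calc ((((Finset.univ.erase (0 : Fin (r + 1))).powerset.erase ∅).card : ℝ) * bS)
        ≤ (2:ℝ) ^ r * bS := mul_le_mul_of_nonneg_right hcardS hbSnn
      _ = δ * ((2:ℝ) ^ r * 6 ^ r) := by rw [hbS]; ring
      _ ≤ Real.sqrt ε := (le_div_iff₀ hKpos).mp hδle
  calc ((((Finset.univ.erase (0 : Fin (r + 1))).powerset.erase ∅).card : ℝ) * bS) ^ 2
      ≤ (Real.sqrt ε) ^ 2 := by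
        refine pow_le_pow_left₀ ?_ hb3 2
        positivity
    _ = ε := Real.sq_sqrt hε.le
end

section
/- Let N ≥ 1 and r ≥ 1 be integers, let c₁, …, c_r be units of ℤ_N, and let ν : ℤ_N → ℝ. Define g : (ℤ_N)^r → ℝ by g(x₁, …, x_r) = ν(c₁x₁ + ⋯ + c_r x_r). Then the Gowers box norm of g over V₁ × ⋯ × V_r with V₁ = ⋯ = V_r = ℤ_N equals the Gowers uniformity norm of ν: ‖g‖_{U^{{1,…,r}}} = ‖ν‖_{U^r}. -/
open Finset
open scoped BigOperators

/-- The Gowers uniformity norm `‖f‖_{U^r}` of `f : ℤ_N → ℝ`. -/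
noncomputable def gowersNorm (N : ℕ) [NeZero N] (r : ℕ) (f : ZMod N → ℝ) : ℝ :=
  (𝔼 x₀ : ZMod N, 𝔼 x : Fin r → ZMod N, ∏ ω : Fin r → Bool,
      f (x₀ + ∑ i, if ω i then x i else 0)) ^ ((1 : ℝ) / 2 ^ r)

/-- Representing a weight `ν : ℤ_N → ℝ` as a hypergraph weight via an invertible linear
form preserves the Gowers uniformity norm: the box norm of
`g(x₁, …, x_r) = ν(c₁x₁ + ⋯ + c_rx_r)` equals `‖ν‖_{U^r}`. -/
theorem boxNorm_linear_form_eq_gowersNorm (N : ℕ) (hN : 1 ≤ N) [NeZero N]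
    (r : ℕ) (hr : 1 ≤ r) (c : Fin r → (ZMod N)ˣ) (ν : ZMod N → ℝ) :
    boxNorm (fun x : Fin r → ZMod N => ν (∑ i, (c i : ZMod N) * x i)) =
      gowersNorm N r ν := by
  unfold boxNorm gowersNorm
  rw [Fintype.card_fin]
  congr 1
  set H : ZMod N → ℝ := fun t => 𝔼 y : Fin r → ZMod N, ∏ ω : Fin r → Bool,
      ν (t + ∑ i, if ω i then y i else 0) with hH
  have step1 : ∀ x₀ x₁ : Fin r → ZMod N, ∀ ω : Fin r → Bool,
      (∑ i, (c i : ZMod N) * mixPoint ω x₀ x₁ i)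
        = (∑ i, (c i : ZMod N) * x₀ i)
          + ∑ i, (if ω i then (c i : ZMod N) * (x₁ i - x₀ i) else 0) := by
    intro x₀ x₁ ω
    rw [← Finset.sum_add_distrib]
    refine Finset.sum_congr rfl fun i _ => ?_
    unfold mixPoint
    by_cases h : ω i <;> simp [h] <;> ring
  have step2 : ∀ x₀ : Fin r → ZMod N,
      (𝔼 x₁ : Fin r → ZMod N, ∏ ω : Fin r → Bool,
          ν (∑ i, (c i : ZMod N) * mixPoint ω x₀ x₁ i))
        = H (∑ i, (c i : ZMod N) * x₀ i) := by
    intro x₀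
    rw [hH]
    refine Fintype.expect_equiv
      (Equiv.piCongrRight fun i => (Equiv.subRight (x₀ i)).trans (Units.mulLeft (c i)))
      _ _ fun x₁ => ?_
    refine Finset.prod_congr rfl fun ω _ => ?_
    have hx : ∀ i, (if ω i then (c i : ZMod N) * (x₁ i - x₀ i) else 0)
        = (if ω i then ((Equiv.piCongrRight fun i =>
            (Equiv.subRight (x₀ i)).trans (Units.mulLeft (c i))) x₁) i else 0) := fun i => by
      by_cases h : ω i <;> simp [h, Equiv.piCongrRight, Units.mulLeft]
    rw [step1, Finset.sum_congr rfl fun i _ => hx i]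
  calc (𝔼 x₀ : Fin r → ZMod N, 𝔼 x₁ : Fin r → ZMod N, ∏ ω : Fin r → Bool,
          ν (∑ i, (c i : ZMod N) * mixPoint ω x₀ x₁ i))
      = 𝔼 x₀ : Fin r → ZMod N, H (∑ i, (c i : ZMod N) * x₀ i) :=
        Finset.expect_congr rfl fun x₀ _ => step2 x₀
    _ = 𝔼 t : ZMod N, H t := ?_
  -- split off the coordinate i₀
  have hi₀ : 0 < r := hr
  set i₀ : Fin r := ⟨0, hi₀⟩
  rw [Fintype.expect_equiv (Equiv.funSplitAt i₀ (ZMod N)) _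
      (fun p => H (∑ i, (c i : ZMod N) * (Equiv.funSplitAt i₀ (ZMod N)).symm p i))
      (fun x₀ => by simp only [Equiv.symm_apply_apply]),
    ← Finset.univ_product_univ, Finset.expect_product, Finset.expect_comm]
  have key : ∀ b : {j : Fin r // j ≠ i₀} → ZMod N,
      (𝔼 a : ZMod N, H (∑ i, (c i : ZMod N) * (Equiv.funSplitAt i₀ (ZMod N)).symm (a, b) i))
        = 𝔼 t : ZMod N, H t := by
    intro b
    set K : ZMod N := ∑ i : Fin r,
      (if h : i = i₀ then (0 : ZMod N) else (c i : ZMod N) * b ⟨i, h⟩) with hK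
    have hsum : ∀ a : ZMod N,
        (∑ i, (c i : ZMod N) * (Equiv.funSplitAt i₀ (ZMod N)).symm (a, b) i)
          = (c i₀ : ZMod N) * a + K := by
      intro a
      have hterm : ∀ i : Fin r, (c i : ZMod N) * (Equiv.funSplitAt i₀ (ZMod N)).symm (a, b) i
          = (if i = i₀ then (c i₀ : ZMod N) * a else 0)
            + (if h : i = i₀ then (0 : ZMod N) else (c i : ZMod N) * b ⟨i, h⟩) := fun i => by
        by_cases h : i = i₀ <;> simp [h, Equiv.funSplitAt, Equiv.piSplitAt]
      rw [Finset.sum_congr rfl fun i _ => hterm i, Finset.sum_add_distrib, hK]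
      congr 1
      rw [Finset.sum_ite_eq' Finset.univ i₀ fun _ => (c i₀ : ZMod N) * a]
      simp
    refine Fintype.expect_equiv ((Units.mulLeft (c i₀)).trans (Equiv.addRight K)) _ _
      fun a => ?_
    rw [hsum a]
    simp [Units.mulLeft]
  rw [Finset.expect_congr rfl fun b _ => key b]
  exact Finset.expect_const Finset.univ_nonempty _
end
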